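/- For the function f_T(s) = s√ρ·sinh(√ρ(T-Δ)⁺) / (cosh(√ρ(T-Δ)⁺) + Δ√ρ·sinh(√ρ(T-Δ)⁺)) on s ∈ [0, Δ∧T]: the identity exp(∫ₛ^{Δ∧T} uρ/(1 + u√ρ·tanh(√ρ(T-u))) du) · s√ρ·sinh(√ρ(T-Δ)⁺)/(cosh(√ρ(T-s)) + s√ρ·sinh(√ρ(T-s))) = f_T(s) holds for all s ∈ [0, Δ∧T]. -/

import Mathlib

open Real MeasureTheory

lemma stmt15_tanh_cont : Continuous Real.tanh := by
  have : Real.tanh = fun x => Real.sinh x / Real.cosh x := by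
    funext x; exact Real.tanh_eq_sinh_div_cosh x
  rw [this]
  exact Real.continuous_sinh.div Real.continuous_cosh fun x => (Real.cosh_pos _).ne'

lemma stmt15_aux (T ρ : ℝ) (hρ : 0 < ρ) {u : ℝ} (hu0 : 0 ≤ u) (huT : u ≤ T) :
    HasDerivAt (fun v => -Real.log (Real.cosh (Real.sqrt ρ * (T - v))
        + v * Real.sqrt ρ * Real.sinh (Real.sqrt ρ * (T - v))))
      (u * ρ / (1 + u * Real.sqrt ρ * Real.tanh (Real.sqrt ρ * (T - u)))) u := by
  set r := Real.sqrt ρ with hr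
  have hr0 : 0 < r := Real.sqrt_pos.mpr hρ
  have hr2 : r * r = ρ := Real.mul_self_sqrt hρ.le
  have hch : (0:ℝ) < Real.cosh (r * (T - u)) := Real.cosh_pos _
  have hsh : (0:ℝ) ≤ Real.sinh (r * (T - u)) :=
    Real.sinh_nonneg_iff.mpr (mul_nonneg hr0.le (by linarith))
  have hD : (0:ℝ) < Real.cosh (r * (T - u)) + u * r * Real.sinh (r * (T - u)) := by
    have : (0:ℝ) ≤ u * r * Real.sinh (r * (T - u)) := by positivity
    linarith
  have hinner : HasDerivAt (fun v : ℝ => r * (T - v)) (-r) u := by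
    have h1 : HasDerivAt (fun v : ℝ => T - v) (-1) u := by
      simpa using (hasDerivAt_id u).const_sub T
    simpa using h1.const_mul r
  have hcosh : HasDerivAt (fun v : ℝ => Real.cosh (r * (T - v)))
      (Real.sinh (r * (T - u)) * (-r)) u := (Real.hasDerivAt_cosh _).comp u hinner
  have hsinh : HasDerivAt (fun v : ℝ => Real.sinh (r * (T - v)))
      (Real.cosh (r * (T - u)) * (-r)) u := (Real.hasDerivAt_sinh _).comp u hinner
  have hmul : HasDerivAt (fun v : ℝ => v * r * Real.sinh (r * (T - v)))
      (r * Real.sinh (r * (T - u)) + u * r * (Real.cosh (r * (T - u)) * (-r))) u := by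
    have h1 : HasDerivAt (fun v : ℝ => v * r) r u := by
      simpa using (hasDerivAt_id u).mul_const r
    exact h1.mul hsinh
  have hDder : HasDerivAt (fun v : ℝ => Real.cosh (r * (T - v))
      + v * r * Real.sinh (r * (T - v)))
      (- (u * ρ * Real.cosh (r * (T - u)))) u := by
    have := hcosh.add hmul
    refine this.congr_deriv ?_
    linear_combination (-(u * Real.cosh (r * (T - u)))) * hr2
  have hlog := (hDder.log hD.ne').neg
  refine hlog.congr_deriv ?_
  have htanh : Real.tanh (r * (T - u)) = Real.sinh (r * (T - u)) / Real.cosh (r * (T - u)) :=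
    Real.tanh_eq_sinh_div_cosh _
  rw [htanh]
  field_simp

theorem stmt15 (T Δ ρ : ℝ) (hT : 0 < T) (hΔ : 0 < Δ) (hρ : 0 < ρ) :
    ∀ s ∈ Set.Icc (0:ℝ) (min Δ T),
      Real.exp (∫ u in s..(min Δ T),
          u * ρ / (1 + u * Real.sqrt ρ * Real.tanh (Real.sqrt ρ * (T - u))))
        * (s * Real.sqrt ρ * Real.sinh (Real.sqrt ρ * max (T - Δ) 0)
            / (Real.cosh (Real.sqrt ρ * (T - s))
                + s * Real.sqrt ρ * Real.sinh (Real.sqrt ρ * (T - s))))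
      = s * Real.sqrt ρ * Real.sinh (Real.sqrt ρ * max (T - Δ) 0)
          / (Real.cosh (Real.sqrt ρ * max (T - Δ) 0)
              + Δ * Real.sqrt ρ * Real.sinh (Real.sqrt ρ * max (T - Δ) 0)) := by
  intro s hs
  set r := Real.sqrt ρ with hr
  have hr0 : 0 < r := Real.sqrt_pos.mpr hρ
  rcases le_or_gt T Δ with hTΔ | hΔT
  · have hmax : max (T - Δ) 0 = 0 := max_eq_right (by linarith)
    simp [hmax]
  · have hmin : min Δ T = Δ := min_eq_left hΔT.le
    have hmax : max (T - Δ) 0 = T - Δ := max_eq_left (by linarith)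
    rw [hmin] at hs ⊢
    rw [hmax]
    obtain ⟨hs0, hsΔ⟩ := hs
    set D : ℝ → ℝ := fun v => Real.cosh (r * (T - v)) + v * r * Real.sinh (r * (T - v))
      with hD
    have hDpos : ∀ v ∈ Set.Icc s Δ, 0 < D v := by
      intro v hv
      have hv0 : 0 ≤ v := le_trans hs0 hv.1
      have hvT : v ≤ T := le_trans hv.2 hΔT.le
      have hch : (0:ℝ) < Real.cosh (r * (T - v)) := Real.cosh_pos _
      have hsh : (0:ℝ) ≤ Real.sinh (r * (T - v)) :=
        Real.sinh_nonneg_iff.mpr (by nlinarith : (0:ℝ) ≤ r * (T - v))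
      have : (0:ℝ) ≤ v * r * Real.sinh (r * (T - v)) := by positivity
      simp only [hD]
      linarith
    have huIcc : Set.uIcc s Δ = Set.Icc s Δ := Set.uIcc_of_le hsΔ
    have hderiv : ∀ u ∈ Set.uIcc s Δ, HasDerivAt (fun v => -Real.log (D v))
        (u * ρ / (1 + u * r * Real.tanh (r * (T - u)))) u := by
      intro u hu
      rw [huIcc] at hu
      exact stmt15_aux T ρ hρ (le_trans hs0 hu.1) (le_trans hu.2 hΔT.le)
    have hint : IntervalIntegrable
        (fun u => u * ρ / (1 + u * r * Real.tanh (r * (T - u)))) volume s Δ := by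
      apply ContinuousOn.intervalIntegrable
      apply ContinuousOn.div
      · exact (continuous_id.mul continuous_const).continuousOn
      · exact (continuous_const.add ((continuous_id.mul continuous_const).mul
          (stmt15_tanh_cont.comp (continuous_const.mul
            (continuous_const.sub continuous_id))))).continuousOn
      · intro u hu
        rw [huIcc] at hu
        have hu0 : 0 ≤ u := le_trans hs0 hu.1
        have huT : u ≤ T := le_trans hu.2 hΔT.le
        have hth : 0 ≤ Real.tanh (r * (T - u)) := by
          rw [Real.tanh_eq_sinh_div_cosh]
          exact div_nonneg (Real.sinh_nonneg_iff.mpr (by nlinarith)) (Real.cosh_pos _).le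
        have : (0:ℝ) ≤ u * r * Real.tanh (r * (T - u)) := by positivity
        positivity
    have hftc := intervalIntegral.integral_eq_sub_of_hasDerivAt hderiv hint
    have hDs : 0 < D s := hDpos s ⟨le_rfl, hsΔ⟩
    have hDΔ : 0 < D Δ := hDpos Δ ⟨hsΔ, le_rfl⟩
    have hexp : Real.exp (∫ u in s..Δ,
        u * ρ / (1 + u * r * Real.tanh (r * (T - u)))) = D s / D Δ := by
      rw [hftc]
      rw [show -Real.log (D Δ) - -Real.log (D s) = Real.log (D s) - Real.log (D Δ) by ring]
      rw [Real.exp_sub, Real.exp_log hDs, Real.exp_log hDΔ]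
    rw [hexp]
    have hDseq : Real.cosh (r * (T - s)) + s * r * Real.sinh (r * (T - s)) = D s := rfl
    have hDΔeq : Real.cosh (r * (T - Δ)) + Δ * r * Real.sinh (r * (T - Δ)) = D Δ := rfl
    rw [hDseq, hDΔeq]
    field_simp
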